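/- Let (a_n) ∈ {0,2,3,5}^ℕ. The following are equivalent: (1) there exists (b_n) ∈ {0,2,3,5}^ℕ with (b_n) ≠ (a_n) and ∑_{n=1}^∞ a_n/4^n = ∑_{n=1}^∞ b_n/4^n; (2) the set {n ∈ ℕ : (a_n, a_{n+1}) ∈ {(2,3), (3,2), (3,0), (2,5)}} is finite and nonempty. -/

import Mathlib

open Set Topology

noncomputable section

namespace GNaux

def Dig (x : ℕ) : Prop := x = 0 ∨ x = 2 ∨ x = 3 ∨ x = 5

lemma dig_le {x : ℕ} (h : Dig x) : x ≤ 5 := by rcases h with h|h|h|h <;> omega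

lemma dig_iff {x : ℕ} : Dig x ↔ x ≤ 5 ∧ x ≠ 1 ∧ x ≠ 4 := by unfold Dig; omega

lemma mem_iff_dig {x : ℕ} : x ∈ ({0, 2, 3, 5} : Set ℕ) ↔ Dig x := by
  simp [Dig, Set.mem_insert_iff]

lemma mem_bad_iff {x y : ℕ} :
    ((x, y) ∈ ({(2, 3), (3, 2), (3, 0), (2, 5)} : Set (ℕ × ℕ))) ↔
      ((x = 2 ∧ y = 3) ∨ (x = 3 ∧ y = 2) ∨ (x = 3 ∧ y = 0) ∨ (x = 2 ∧ y = 5)) := by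
  simp [Set.mem_insert_iff, Prod.ext_iff]

lemma summable_val {a : ℕ → ℕ} (ha : ∀ k, a k ≤ 5) :
    Summable (fun k => (a k : ℝ) / 4 ^ (k + 1)) := by
  apply Summable.of_nonneg_of_le (fun k => by positivity) (fun k => ?_)
    ((summable_geometric_of_lt_one (by norm_num) (by norm_num : (1:ℝ)/4 < 1)).mul_left 5)
  have h1 : (a k : ℝ) ≤ 5 := by exact_mod_cast ha k
  have h2 : (0:ℝ) < 4 ^ (k + 1) := by positivity
  have h3 : ((1:ℝ)/4)^k = 1/4^k := by rw [div_pow, one_pow]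
  calc (a k : ℝ)/4^(k+1) ≤ 5/4^(k+1) := by gcongr
    _ ≤ 5/4^k := by
        have h4 : (4:ℝ)^k ≤ 4^(k+1) := pow_le_pow_right₀ (by norm_num) (by omega)
        rw [div_le_div_iff₀ (by positivity) (by positivity)]
        nlinarith
    _ = 5 * (1/4:ℝ)^k := by rw [h3]; ring

/-- The difference series term. -/
def d (a b : ℕ → ℕ) (k : ℕ) : ℝ := ((b k : ℝ) - a k) / 4 ^ (k + 1)

lemma summable_d {a b : ℕ → ℕ} (ha : ∀ k, a k ≤ 5) (hb : ∀ k, b k ≤ 5) :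
    Summable (d a b) := by
  have := (summable_val hb).sub (summable_val ha)
  apply this.congr
  intro k
  rw [d, sub_div]

lemma tsum_d_eq {a b : ℕ → ℕ} (ha : ∀ k, a k ≤ 5) (hb : ∀ k, b k ≤ 5) :
    ∑' k, d a b k = (∑' k, (b k : ℝ) / 4 ^ (k + 1)) - ∑' k, (a k : ℝ) / 4 ^ (k + 1) := by
  rw [← Summable.tsum_sub (summable_val hb) (summable_val ha)]
  exact tsum_congr fun k => by rw [d, sub_div]

lemma tail_bound {a b : ℕ → ℕ} (ha : ∀ k, a k ≤ 5) (hb : ∀ k, b k ≤ 5) (m : ℕ) :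
    |∑' k, d a b (k + m)| ≤ 5 / (3 * 4 ^ m) := by
  have hS : Summable (fun k => d a b (k + m)) :=
    (summable_nat_add_iff m).2 (summable_d ha hb)
  have hgeo : Summable (fun k : ℕ => 5 / 4 ^ (m + 1) * (1/4 : ℝ) ^ k) :=
    (summable_geometric_of_lt_one (by norm_num) (by norm_num : (1:ℝ)/4 < 1)).mul_left _
  have hb1 : ∀ k : ℕ, |d a b (k + m)| ≤ 5 / 4 ^ (m + 1) * (1/4 : ℝ) ^ k := by
    intro k
    have h1 : |((b (k+m) : ℝ) - a (k+m))| ≤ 5 := by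
      rw [abs_le]
      constructor
      · have := hb (k+m); have : (0:ℝ) ≤ (b (k+m):ℝ) := by positivity
        have h2 : (a (k+m) : ℝ) ≤ 5 := by exact_mod_cast ha (k+m)
        linarith
      · have h2 : (b (k+m) : ℝ) ≤ 5 := by exact_mod_cast hb (k+m)
        have : (0:ℝ) ≤ (a (k+m):ℝ) := by positivity
        linarith
    rw [d, abs_div, abs_of_pos (by positivity : (0:ℝ) < 4 ^ (k + m + 1))]
    have h2 : (4:ℝ) ^ (k + m + 1) = 4 ^ (m + 1) * 4 ^ k := by rw [← pow_add]; ring_nf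
    rw [h2]
    rw [div_le_iff₀ (by positivity)]
    have h3 : ((1:ℝ)/4)^k = 1/4^k := by rw [div_pow, one_pow]
    rw [h3]
    calc |((b (k+m) : ℝ) - a (k+m))| ≤ 5 := h1
      _ = 5 / 4 ^ (m+1) * (1 / 4 ^ k) * (4 ^ (m+1) * 4 ^ k) := by field_simp
  have habs : Summable (fun k => |d a b (k + m)|) := hS.abs
  have h0 : ‖∑' k, d a b (k + m)‖ ≤ ∑' k, ‖d a b (k + m)‖ :=
    norm_tsum_le_tsum_norm (by simpa only [Real.norm_eq_abs] using habs)
  simp only [Real.norm_eq_abs] at h0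
  calc |∑' k, d a b (k + m)| ≤ ∑' k, |d a b (k + m)| := h0
    _ ≤ ∑' k : ℕ, 5 / 4 ^ (m + 1) * (1/4 : ℝ) ^ k := Summable.tsum_le_tsum hb1 habs hgeo
    _ = 5 / 4 ^ (m + 1) * (1 - 1/4)⁻¹ := by
        rw [tsum_mul_left, tsum_geometric_of_lt_one (by norm_num) (by norm_num)]
    _ = 5 / (3 * 4 ^ m) := by
        rw [pow_succ]
        field_simp
        ring


lemma peel {a b : ℕ → ℕ} (ha : ∀ k, a k ≤ 5) (hb : ∀ k, b k ≤ 5) (m : ℕ) :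
    ∑' k, d a b (k + m) = d a b m + ∑' k, d a b (k + (m + 1)) := by
  have hS : Summable (fun k => d a b (k + m)) :=
    (summable_nat_add_iff m).2 (summable_d ha hb)
  rw [Summable.tsum_eq_zero_add hS]
  congr 1
  · simp
  · exact tsum_congr fun k => congrArg (d a b) (by omega)

/-- The key step lemma. -/
lemma step {a b : ℕ → ℕ} (ha : ∀ k, Dig (a k)) (hb : ∀ k, Dig (b k))
    {m : ℕ} {σ : ℤ} (hσ : σ = 0 ∨ σ = 1 ∨ σ = -1)
    (hne : σ = 0 → a m ≠ b m)
    (h : ∑' k, d a b (k + m) = (σ : ℝ) / 4 ^ m) :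
    ∃ τ : ℤ, (τ = 1 ∨ τ = -1) ∧
      (∑' k, d a b (k + (m + 1)) = (τ : ℝ) / 4 ^ (m + 1)) ∧
      (b m : ℤ) = a m + 4 * σ - τ := by
  have ha5 : ∀ k, a k ≤ 5 := fun k => dig_le (ha k)
  have hb5 : ∀ k, b k ≤ 5 := fun k => dig_le (hb k)
  set z : ℤ := 4 * σ - ((b m : ℤ) - a m) with hzdef
  have h4 : (4:ℝ) ^ (m + 1) = 4 ^ m * 4 := pow_succ 4 m
  have hz : ∑' k, d a b (k + (m + 1)) = (z : ℝ) / 4 ^ (m + 1) := by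
    have hp := peel ha5 hb5 m
    rw [h] at hp
    have : ∑' k, d a b (k + (m + 1)) = (σ : ℝ) / 4 ^ m - d a b m := by linarith
    rw [this, d, hzdef]
    push_cast
    field_simp
    ring
  have hzb : |(z : ℝ)| ≤ 5 / 3 := by
    have := tail_bound ha5 hb5 (m + 1)
    rw [hz, abs_div, abs_of_pos (by positivity : (0:ℝ) < 4 ^ (m + 1))] at this
    rw [div_le_div_iff₀ (by positivity) (by positivity)] at this
    nlinarith [this, (by positivity : (0:ℝ) < 4 ^ (m + 1))]
  have hz1 : -1 ≤ z ∧ z ≤ 1 := by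
    rw [← abs_le]
    by_contra hcon
    have h2 : (2:ℤ) ≤ |z| := by omega
    have h2' : (2:ℝ) ≤ |(z:ℝ)| := by rw [← Int.cast_abs]; exact_mod_cast h2
    linarith
  have hz2 : z ≠ 0 := by
    intro h0
    rcases hσ with h1 | h1 | h1
    · exact hne h1 (by omega)
    · rcases ha m with h2|h2|h2|h2 <;> rcases hb m with h3|h3|h3|h3 <;> omega
    · rcases ha m with h2|h2|h2|h2 <;> rcases hb m with h3|h3|h3|h3 <;> omega
  obtain ⟨hl, hr⟩ := hz1
  refine ⟨z, by omega, hz, by omega⟩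


/-- arithmetic version of the "bad pair" condition -/
def Bd (a : ℕ → ℕ) (m : ℕ) : Prop :=
  (a m = 2 ∧ a (m+1) = 3) ∨ (a m = 3 ∧ a (m+1) = 2) ∨
  (a m = 3 ∧ a (m+1) = 0) ∨ (a m = 2 ∧ a (m+1) = 5)

lemma forward_key {a b : ℕ → ℕ} (ha : ∀ k, Dig (a k)) (hb : ∀ k, Dig (b k))
    (hne : b ≠ a)
    (hsum : ∑' k, (a k : ℝ) / 4 ^ (k + 1) = ∑' k, (b k : ℝ) / 4 ^ (k + 1)) :
    ∃ n : ℕ, Bd a n ∧ ∀ m, n < m → ¬ Bd a m := by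
  have ha5 : ∀ k, a k ≤ 5 := fun k => dig_le (ha k)
  have hb5 : ∀ k, b k ≤ 5 := fun k => dig_le (hb k)
  have hex : ∃ n, b n ≠ a n := Function.ne_iff.mp hne
  classical
  obtain ⟨n, hn, hmin⟩ : ∃ n, b n ≠ a n ∧ ∀ i, i < n → b i = a i :=
    ⟨Nat.find hex, Nat.find_spec hex, fun i hi => not_not.mp (Nat.find_min hex hi)⟩
  have hd0 : ∑' k, d a b k = 0 := by
    rw [tsum_d_eq ha5 hb5, hsum, sub_self]
  have hTn : ∑' k, d a b (k + n) = (((0:ℤ)) : ℝ) / 4 ^ n := by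
    have h1 := Summable.sum_add_tsum_nat_add n (summable_d ha5 hb5)
    have h2 : ∑ i ∈ Finset.range n, d a b i = 0 :=
      Finset.sum_eq_zero fun i hi => by
        rw [d, hmin i (Finset.mem_range.mp hi)]; ring
    rw [hd0, h2, zero_add] at h1
    rw [h1]
    norm_num
  obtain ⟨τ₀, hτ₀, hTn1, hbn⟩ :=
    step ha hb (Or.inl rfl) (fun _ => fun h => hn h.symm) hTn
  have H : ∀ j, ∃ τ : ℤ, (τ = 1 ∨ τ = -1) ∧
      ∑' k, d a b (k + (n + 1 + j)) = (τ : ℝ) / 4 ^ (n + 1 + j) := by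
    intro j
    induction j with
    | zero => exact ⟨τ₀, hτ₀, by simpa using hTn1⟩
    | succ j ih =>
        obtain ⟨τ, hτ, hT⟩ := ih
        obtain ⟨τ', hτ', hT', _⟩ :=
          step ha hb (Or.inr hτ) (fun h0 => absurd h0 (by omega)) hT
        refine ⟨τ', hτ', ?_⟩
        rw [show n + 1 + (j + 1) = n + 1 + j + 1 from by omega]
        exact hT'
  have H' : ∀ m, n + 1 ≤ m → ∃ τ : ℤ, (τ = 1 ∨ τ = -1) ∧
      ∑' k, d a b (k + m) = (τ : ℝ) / 4 ^ m := by
    intro m hm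
    obtain ⟨τ, h1, h2⟩ := H (m - (n + 1))
    rw [show n + 1 + (m - (n + 1)) = m from by omega] at h2
    exact ⟨τ, h1, h2⟩
  refine ⟨n, ?_, ?_⟩
  · -- the pair at n is bad
    obtain ⟨τ₁, hτ₁, _, hb1⟩ :=
      step ha hb (Or.inr hτ₀) (fun h0 => absurd h0 (by omega)) hTn1
    have d1 := dig_iff.mp (ha n); have d2 := dig_iff.mp (ha (n+1))
    have d3 := dig_iff.mp (hb n); have d4 := dig_iff.mp (hb (n+1))
    have hn' : a n ≠ b n := fun h => hn (by omega)
    unfold Bd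
    rcases hτ₀ with h|h <;> rcases hτ₁ with g|g <;> subst h g <;> omega
  · intro m hm hbad
    obtain ⟨τ, hτ, hT⟩ := H' m (by omega)
    obtain ⟨τ', hτ', hT', hb1⟩ :=
      step ha hb (Or.inr hτ) (fun h0 => absurd h0 (by omega)) hT
    obtain ⟨ρ, hρ, _, hb2⟩ :=
      step ha hb (Or.inr hτ') (fun h0 => absurd h0 (by omega)) hT'
    have d1 := dig_iff.mp (ha m); have d2 := dig_iff.mp (ha (m+1))
    have d3 := dig_iff.mp (hb m); have d4 := dig_iff.mp (hb (m+1))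
    unfold Bd at hbad
    rcases hτ with h|h <;> rcases hτ' with g|g <;> rcases hρ with f|f <;>
      subst h g f <;> omega


lemma reverse_key {a : ℕ → ℕ} (ha : ∀ k, Dig (a k)) {n : ℕ} (hbd : Bd a n)
    (hnb : ∀ m, n < m → ¬ Bd a m) :
    ∃ b : ℕ → ℕ, (∀ k, Dig (b k)) ∧ b ≠ a ∧
      ∑' k, (a k : ℝ) / 4 ^ (k + 1) = ∑' k, (b k : ℝ) / 4 ^ (k + 1) := by
  classical
  have ha5 : ∀ k, a k ≤ 5 := fun k => dig_le (ha k)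
  set b : ℕ → ℕ := fun k =>
    if k < n then a k else if k = n then 5 - a k else
      if a k ≤ 2 then (if a (k + 1) ≤ 2 then a k + 3 else a k + 5)
      else (if a (k + 1) ≤ 2 then a k - 5 else a k - 3) with hbdef
  have hblt : ∀ k, k < n → b k = a k := by
    intro k hk; simp only [hbdef]; rw [if_pos hk]
  have hbn : b n = 5 - a n := by
    simp only [hbdef]; rw [if_neg (by omega)]; simp
  have hbgt : ∀ k, n < k → b k =
      (if a k ≤ 2 then (if a (k + 1) ≤ 2 then a k + 3 else a k + 5)
       else (if a (k + 1) ≤ 2 then a k - 5 else a k - 3)) := by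
    intro k hk; simp only [hbdef]; rw [if_neg (by omega), if_neg (by omega)]
  have han : a n = 2 ∨ a n = 3 := by unfold Bd at hbd; omega
  have hbdig : ∀ k, Dig (b k) := by
    intro k
    rcases lt_trichotomy k n with hk | hk | hk
    · rw [hblt k hk]; exact ha k
    · subst hk; rw [hbn]; unfold Dig; omega
    · rw [hbgt k hk]
      have hnb' := hnb k hk
      unfold Bd at hnb'
      have d1 := dig_iff.mp (ha k); have d2 := dig_iff.mp (ha (k + 1))
      unfold Dig
      split_ifs <;> omega
  have hbne : b ≠ a := by
    intro h
    have := congrFun h n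
    rw [hbn] at this
    omega
  have hb5 : ∀ k, b k ≤ 5 := fun k => dig_le (hbdig k)
  set E : ℕ → ℝ := fun m => (if a m ≤ 2 then 1 else -1) / 4 ^ m with hEdef
  have hd_eq : ∀ m, n < m → d a b m = E m - E (m + 1) := by
    intro m hm
    have hbm := hbgt m hm
    have hnb' := hnb m hm
    unfold Bd at hnb'
    have hps : (4:ℝ) ^ (m + 1) = 4 ^ m * 4 := pow_succ 4 m
    rcases ha m with h1|h1|h1|h1 <;> rcases ha (m + 1) with h2|h2|h2|h2 <;>
      simp only [E, d, hbm, h1, h2] <;> norm_num <;>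
      first
        | omega
        | (rw [hps]; field_simp; ring)
  have hkey : ∀ j, (∑ i ∈ Finset.range (n + 1 + j), d a b i) = - E (n + 1 + j) := by
    intro j
    induction j with
    | zero =>
        have h0 : ∑ i ∈ Finset.range n, d a b i = 0 :=
          Finset.sum_eq_zero fun i hi => by
            rw [d, hblt i (Finset.mem_range.mp hi)]; ring
        have : n + 1 + 0 = n + 1 := rfl
        rw [this, Finset.sum_range_succ, h0, zero_add]
        unfold Bd at hbd
        rcases hbd with ⟨h1, h2⟩ | ⟨h1, h2⟩ | ⟨h1, h2⟩ | ⟨h1, h2⟩ <;>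
          simp only [E, d, hbn, h1, h2] <;> norm_num <;> ring
    | succ j ih =>
        rw [show n + 1 + (j + 1) = (n + 1 + j) + 1 from rfl, Finset.sum_range_succ, ih,
          hd_eq (n + 1 + j) (by omega)]
        ring
  have Sg : Summable (d a b) := summable_d ha5 hb5
  have hpart := Sg.hasSum.tendsto_sum_nat
  have hE0 : Filter.Tendsto (fun m => - E m) Filter.atTop (𝓝 0) := by
    apply squeeze_zero_norm (fun m => ?_)
      (tendsto_pow_atTop_nhds_zero_of_lt_one (by norm_num) (by norm_num : (1/4:ℝ) < 1))
    have h3 : ((1:ℝ)/4) ^ m = 1 / 4 ^ m := by rw [div_pow, one_pow]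
    rw [h3]
    simp only [E, norm_neg, Real.norm_eq_abs]
    split_ifs <;> rw [abs_div] <;>
      simp [abs_of_pos (show (0:ℝ) < 4 ^ m by positivity)]
  have heq : (fun m => ∑ i ∈ Finset.range m, d a b i) =ᶠ[Filter.atTop]
      (fun m => - E m) := by
    rw [Filter.EventuallyEq, Filter.eventually_atTop]
    refine ⟨n + 1, fun m hm => ?_⟩
    obtain ⟨j, rfl⟩ : ∃ j, m = n + 1 + j := ⟨m - (n + 1), by omega⟩
    exact hkey j
  have h0 : Filter.Tendsto (fun m => ∑ i ∈ Finset.range m, d a b i)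
      Filter.atTop (𝓝 0) := Filter.Tendsto.congr' heq.symm hE0
  have hzero : ∑' k, d a b k = 0 := tendsto_nhds_unique hpart h0
  rw [tsum_d_eq ha5 hb5] at hzero
  exact ⟨b, hbdig, hbne, by linarith⟩

end GNaux


theorem gn_unique_characterization (a : ℕ → ℕ) (ha : ∀ n, a n ∈ ({0, 2, 3, 5} : Set ℕ)) :
    (∃ b : ℕ → ℕ, (∀ n, b n ∈ ({0, 2, 3, 5} : Set ℕ)) ∧ b ≠ a ∧
        ∑' n : ℕ, (a n : ℝ) / 4 ^ (n + 1) = ∑' n : ℕ, (b n : ℝ) / 4 ^ (n + 1)) ↔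
      ({n : ℕ | (a n, a (n + 1)) ∈ ({(2, 3), (3, 2), (3, 0), (2, 5)} : Set (ℕ × ℕ))}.Finite ∧
        {n : ℕ | (a n, a (n + 1)) ∈ ({(2, 3), (3, 2), (3, 0), (2, 5)} : Set (ℕ × ℕ))}.Nonempty) := by
  have ha' : ∀ k, GNaux.Dig (a k) := fun k => GNaux.mem_iff_dig.mp (ha k)
  have hsetGNaux.Bd : ∀ m : ℕ,
      ((a m, a (m + 1)) ∈ ({(2, 3), (3, 2), (3, 0), (2, 5)} : Set (ℕ × ℕ))) ↔ GNaux.Bd a m := by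
    intro m; rw [GNaux.mem_bad_iff]; rfl
  constructor
  · rintro ⟨b, hb, hbne, hsum⟩
    have hb' : ∀ k, GNaux.Dig (b k) := fun k => GNaux.mem_iff_dig.mp (hb k)
    obtain ⟨n, hbd, hnb⟩ := GNaux.forward_key ha' hb' hbne hsum
    constructor
    · apply Set.Finite.subset (Set.finite_Iic n)
      intro m hm
      simp only [Set.mem_setOf_eq, hsetGNaux.Bd] at hm
      simp only [Set.mem_Iic]
      by_contra h
      exact hnb m (by omega) hm
    · exact ⟨n, by simp only [Set.mem_setOf_eq, hsetGNaux.Bd]; exact hbd⟩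
  · rintro ⟨hfin, ⟨n0, hn0⟩⟩
    obtain ⟨n, hnmem, hmax⟩ := hfin.exists_maximalFor id _ ⟨n0, hn0⟩
    have hnb : ∀ m, n < m → ¬ GNaux.Bd a m := by
      intro m hm hbad
      have hmem : m ∈ {n : ℕ | (a n, a (n + 1)) ∈
          ({(2, 3), (3, 2), (3, 0), (2, 5)} : Set (ℕ × ℕ))} := by
        simp only [Set.mem_setOf_eq, hsetGNaux.Bd]; exact hbad
      have := hmax (j := m) hmem (le_of_lt hm)
      simp only [id] at this
      omega
    have hbd : GNaux.Bd a n := by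
      have := hnmem
      simp only [Set.mem_setOf_eq, hsetGNaux.Bd] at this
      exact this
    obtain ⟨b, hbdig, hbne, hsum⟩ := GNaux.reverse_key ha' hbd hnb
    exact ⟨b, fun k => GNaux.mem_iff_dig.mpr (hbdig k), hbne, hsum⟩
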